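/- Let L be a field of characteristic zero and let d be an L-derivation on the formal power series ring L[[t1,...,tn]] (n > 1) that is continuous for the maximal-ideal-adic topology. If there exists x1 in the maximal ideal with d(x1) = 1, then there exist y2, ..., yn such that x1, y2, ..., yn form a system of parameters (i.e., generate the maximal ideal) and d(yi) = 0 for all i; consequently d = ∂/∂x1 in this coordinate system. -/

import Mathlib

open MvPowerSeries Finsupp

set_option linter.unusedSectionVars false

section Aux
variable {L : Type*} [Field L] [CharZero L] {n : ℕ}

variable {L : Type*} [Field L] {n : ℕ}

/-- The coefficient-wise "order ≥ r" predicate. -/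
def ordGe (r : ℕ) (f : MvPowerSeries (Fin n) L) : Prop :=
  ∀ m : Fin n →₀ ℕ, m.degree < r → MvPowerSeries.coeff m f = 0

lemma deg_add (a b : Fin n →₀ ℕ) : (a + b).degree = a.degree + b.degree := by
  simp only [degree_eq_weight_one, map_add]

lemma coeff_lsmul (m : Fin n →₀ ℕ) (a : L) (f : MvPowerSeries (Fin n) L) :
    MvPowerSeries.coeff m (a • f) = a * MvPowerSeries.coeff m f := rfl

lemma lsmul_mem {I : Ideal (MvPowerSeries (Fin n) L)} (a : L)
    {x : MvPowerSeries (Fin n) L} (hx : x ∈ I) : a • x ∈ I :=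
  I.smul_of_tower_mem a hx

lemma deg_one_eq (m : Fin n →₀ ℕ) (h : m.degree = 1) : ∃ t, m = Finsupp.single t 1 := by
  have hne : m ≠ 0 := by
    intro h0; rw [h0] at h; simp at h
  obtain ⟨i, hi⟩ := Finsupp.support_nonempty_iff.2 hne
  refine ⟨i, Finsupp.eq_single_iff.2 ⟨?_, ?_⟩⟩
  · intro j hj
    simp only [Finset.mem_singleton]
    by_contra hji
    have h2 : 2 ≤ m.degree := by
      have : ({i, j} : Finset (Fin n)) ⊆ m.support := by
        intro k hk; simp at hk; rcases hk with rfl | rfl <;> assumption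
      calc 2 = 1 + 1 := rfl
        _ ≤ m i + m j := by
          have hi' := Finsupp.mem_support_iff.1 hi
          have hj' := Finsupp.mem_support_iff.1 hj
          omega
        _ = ∑ k ∈ ({i, j} : Finset (Fin n)), m k := by
          rw [Finset.sum_pair (by intro hh; exact hji hh.symm)]
        _ ≤ m.degree := Finset.sum_le_sum_of_subset this
    omega
  · have h1 : m i ≤ 1 := h ▸ Finsupp.le_degree i m
    have h2 := Finsupp.mem_support_iff.1 hi
    omega

variable {L : Type*} [Field L] {n : ℕ}

lemma ordGe.mono {r r' : ℕ} (h : r' ≤ r) {f : MvPowerSeries (Fin n) L} (hf : ordGe r f) :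
    ordGe r' f := fun m hm => hf m (lt_of_lt_of_le hm h)

lemma ordGe_mul {a b : ℕ} {f g : MvPowerSeries (Fin n) L}
    (hf : ordGe a f) (hg : ordGe b g) : ordGe (a + b) (f * g) := by
  classical
  intro m hm
  rw [MvPowerSeries.coeff_mul]
  apply Finset.sum_eq_zero
  rintro ⟨p, q⟩ hpq
  rw [Finset.HasAntidiagonal.mem_antidiagonal] at hpq
  have : p.degree + q.degree < a + b := by
    rw [← deg_add, hpq]; exact hm
  rcases lt_or_ge p.degree a with hp | hp
  · rw [hf p hp, zero_mul]
  · rw [hg q (by omega), mul_zero]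

lemma mem_pow_ordGe {M : Ideal (MvPowerSeries (Fin n) L)}
    (hM : M = RingHom.ker (MvPowerSeries.constantCoeff))
    {r : ℕ} {f : MvPowerSeries (Fin n) L} (hf : f ∈ M ^ r) : ordGe r f := by
  induction r generalizing f with
  | zero => intro m hm; omega
  | succ r ih =>
    rw [pow_succ] at hf
    refine Submodule.mul_induction_on hf ?_ ?_
    · intro f hfm g hgm
      have h1 : ordGe r f := ih hfm
      have h0 : ordGe 1 g := by
        intro m hm
        have : m = 0 := by
          rwa [Nat.lt_one_iff, Finsupp.degree_eq_zero_iff] at hm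
        subst this
        rw [hM, RingHom.mem_ker] at hgm
        exact hgm
      exact ordGe_mul h1 h0
    · intro x y hx hy m hm
      rw [map_add, hx m hm, hy m hm, add_zero]

/-- The `i`-th quotient in writing `f` (with zero constant term) as `∑ i, X i * Dg f i`. -/
noncomputable def Dg (f : MvPowerSeries (Fin n) L) (i : Fin n) : MvPowerSeries (Fin n) L :=
  fun m => if ∀ j ∈ (m + Finsupp.single i 1).support, i ≤ j
    then MvPowerSeries.coeff (m + Finsupp.single i 1) f else 0

lemma coeff_Dg (f : MvPowerSeries (Fin n) L) (i : Fin n) (m : Fin n →₀ ℕ) :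
    MvPowerSeries.coeff m (Dg f i) =
      if ∀ j ∈ (m + Finsupp.single i 1).support, i ≤ j
      then MvPowerSeries.coeff (m + Finsupp.single i 1) f else 0 := rfl

lemma ordGe_Dg {r : ℕ} {f : MvPowerSeries (Fin n) L} (hf : ordGe (r + 1) f) (i : Fin n) :
    ordGe r (Dg f i) := by
  intro m hm
  rw [coeff_Dg]
  split_ifs with h
  · apply hf
    rw [deg_add]
    have : (Finsupp.single i 1).degree = 1 := by
      rw [degree_eq_weight_one]
      simp [Finsupp.weight_apply]
    omega
  · rfl

lemma coeff_X_mul_Dg (f : MvPowerSeries (Fin n) L) (i : Fin n) (m : Fin n →₀ ℕ) :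
    MvPowerSeries.coeff m (X i * Dg f i) =
      if Finsupp.single i 1 ≤ m ∧ ∀ j ∈ m.support, i ≤ j
      then MvPowerSeries.coeff m f else 0 := by
  classical
  rw [X, MvPowerSeries.coeff_monomial_mul]
  by_cases hle : Finsupp.single i 1 ≤ m
  · have hmm : m - Finsupp.single i 1 + Finsupp.single i 1 = m := tsub_add_cancel_of_le hle
    rw [if_pos hle, one_mul, coeff_Dg, hmm]
    by_cases hmin : ∀ j ∈ m.support, i ≤ j
    · rw [if_pos hmin, if_pos ⟨hle, hmin⟩]
    · rw [if_neg hmin, if_neg (by rintro ⟨-, h⟩; exact hmin h)]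
  · rw [if_neg hle, if_neg (by rintro ⟨h, -⟩; exact hle h)]

lemma sum_X_Dg (f : MvPowerSeries (Fin n) L)
    (hf : MvPowerSeries.constantCoeff f = 0) :
    ∑ i, X i * Dg f i = f := by
  apply MvPowerSeries.ext
  intro m
  rw [map_sum]
  simp only [coeff_X_mul_Dg]
  by_cases hm : m = 0
  · subst hm
    rw [Finset.sum_eq_zero]
    · exact hf.symm
    intro i _
    rw [if_neg]
    rintro ⟨hle, -⟩
    have := hle i
    simp at this
  · have hne := Finsupp.support_nonempty_iff.2 hm
    set i0 := m.support.min' hne with hi0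
    rw [Finset.sum_eq_single i0]
    · rw [if_pos]
      constructor
      · rw [Finsupp.single_le_iff]
        have : i0 ∈ m.support := m.support.min'_mem hne
        have := Finsupp.mem_support_iff.1 this
        omega
      · intro j hj; exact m.support.min'_le j hj
    · intro i _ hi
      rw [if_neg]
      rintro ⟨hle, hall⟩
      apply hi
      have hmem : i ∈ m.support := by
        rw [Finsupp.mem_support_iff]
        have := Finsupp.single_le_iff.1 hle
        omega
      have h1 : i0 ≤ i := m.support.min'_le i hmem
      have h2 : i ≤ i0 := hall i0 (m.support.min'_mem hne)
      exact le_antisymm h2 h1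
    · intro h; exact absurd (Finset.mem_univ i0) h

lemma ordGe_mem_pow {M : Ideal (MvPowerSeries (Fin n) L)}
    (hM : M = RingHom.ker (MvPowerSeries.constantCoeff))
    {r : ℕ} {f : MvPowerSeries (Fin n) L} (hf : ordGe r f) : f ∈ M ^ r := by
  induction r generalizing f with
  | zero => simp
  | succ r ih =>
    have hc : MvPowerSeries.constantCoeff f = 0 := by
      have := hf 0 (by simp)
      simpa using this
    rw [← sum_X_Dg f hc]
    apply Submodule.sum_mem
    intro i _
    rw [pow_succ']
    apply Ideal.mul_mem_mul
    · rw [hM, RingHom.mem_ker, MvPowerSeries.constantCoeff_X]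
    · apply ih
      intro m hm
      have : ordGe r (Dg f i) := ordGe_Dg hf i
      exact this m hm

variable {L : Type*} [Field L] [CharZero L] {n : ℕ}

lemma deg_single (t : Fin n) : (Finsupp.single t 1).degree = 1 := by
  exact Finsupp.degree_single t 1

section Psi

variable (d : Derivation L (MvPowerSeries (Fin n) L) (MvPowerSeries (Fin n) L))
  (x1 : MvPowerSeries (Fin n) L)

noncomputable def termk (f : MvPowerSeries (Fin n) L) (k : ℕ) : MvPowerSeries (Fin n) L :=
  ((k.factorial : L))⁻¹ • ((-x1) ^ k * (⇑d)^[k] f)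

noncomputable def uk (f : MvPowerSeries (Fin n) L) (k : ℕ) : MvPowerSeries (Fin n) L :=
  ((k.factorial : L))⁻¹ • ((-x1) ^ k * (⇑d)^[k + 1] f)

noncomputable def psiS (f : MvPowerSeries (Fin n) L) (N : ℕ) : MvPowerSeries (Fin n) L :=
  ∑ k ∈ Finset.range N, termk d x1 f k

noncomputable def psi (f : MvPowerSeries (Fin n) L) : MvPowerSeries (Fin n) L :=
  fun m => MvPowerSeries.coeff m (psiS d x1 f (m.degree + 1))

variable {M : Ideal (MvPowerSeries (Fin n) L)}
  (hM : M = RingHom.ker (MvPowerSeries.constantCoeff))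
  (hx1 : x1 ∈ M)

include hx1 in
lemma termk_mem (f : MvPowerSeries (Fin n) L) (k : ℕ) : termk d x1 f k ∈ M ^ k :=
  Submodule.smul_of_tower_mem _ _
    (Ideal.mul_mem_right _ _ (Ideal.pow_mem_pow (neg_mem hx1) k))

include hx1 in
lemma uk_mem (f : MvPowerSeries (Fin n) L) (k : ℕ) : uk d x1 f k ∈ M ^ k :=
  Submodule.smul_of_tower_mem _ _
    (Ideal.mul_mem_right _ _ (Ideal.pow_mem_pow (neg_mem hx1) k))

include hM hx1 in
lemma coeff_psi_eq (f : MvPowerSeries (Fin n) L) (m : Fin n →₀ ℕ) {N : ℕ}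
    (hN : m.degree < N) :
    MvPowerSeries.coeff m (psi d x1 f) = MvPowerSeries.coeff m (psiS d x1 f N) := by
  have key : ∀ N' : ℕ, m.degree < N' →
      MvPowerSeries.coeff m (psiS d x1 f N') =
        ∑ k ∈ Finset.range (m.degree + 1), MvPowerSeries.coeff m (termk d x1 f k) := by
    intro N' hN'
    rw [psiS, map_sum]
    apply (Finset.sum_subset (Finset.range_subset_range.2 (by omega)) _).symm
    intro k hk hk'
    simp only [Finset.mem_range] at hk hk'
    exact mem_pow_ordGe hM (termk_mem d x1 hx1 f k) m (by omega)
  have h1 : MvPowerSeries.coeff m (psi d x1 f) =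
      MvPowerSeries.coeff m (psiS d x1 f (m.degree + 1)) := rfl
  rw [h1, key _ (by omega), key N hN]

include hM hx1 in
lemma ordGe_psi_sub (f : MvPowerSeries (Fin n) L) (N : ℕ) :
    ordGe N (psi d x1 f - psiS d x1 f N) := by
  intro m hm
  rw [map_sub, coeff_psi_eq d x1 hM hx1 f m hm, sub_self]

variable (hdx1 : d x1 = 1)

include hdx1 in
lemma d_termk (f : MvPowerSeries (Fin n) L) (k : ℕ) :
    d (termk d x1 f (k + 1)) = uk d x1 f (k + 1) - uk d x1 f k := by
  have hne : ((k + 1 : ℕ) : L) ≠ 0 := Nat.cast_ne_zero.2 (Nat.succ_ne_zero k)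
  have hne' : ((k.factorial : ℕ) : L) ≠ 0 := Nat.cast_ne_zero.2 k.factorial_ne_zero
  have hne'' : ((k:L) + 1) ≠ 0 := by exact_mod_cast hne
  have hfac : (((k + 1).factorial : L))⁻¹ * ((k + 1 : ℕ) : L) = ((k.factorial : L))⁻¹ := by
    rw [Nat.factorial_succ, Nat.cast_mul]
    field_simp
  rw [termk, uk, uk, Derivation.map_smul, Derivation.leibniz, Derivation.leibniz_pow,
    map_neg, hdx1]
  have h2 : ((⇑d)^[k + 1] f) • ((k + 1) • (-x1) ^ (k + 1 - 1) • (-(1 : MvPowerSeries (Fin n) L)))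
      = ((k + 1 : ℕ) : L) • (-((-x1) ^ k * (⇑d)^[k + 1] f)) := by
    rw [smul_eq_mul, smul_eq_mul, Nat.add_sub_cancel]
    rw [← Nat.cast_smul_eq_nsmul L (k + 1)]
    rw [mul_smul_comm]
    congr 1
    ring
  rw [h2, smul_add, smul_smul, hfac, smul_neg, smul_eq_mul]
  have h3 : (-x1) ^ (k + 1) * d ((⇑d)^[k + 1] f) = (-x1) ^ (k + 1) * (⇑d)^[k + 1 + 1] f := by
    rw [Function.iterate_succ_apply' (⇑d) (k + 1) f]
  rw [h3]
  abel

include hdx1 in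
lemma d_psiS (f : MvPowerSeries (Fin n) L) (N : ℕ) :
    d (psiS d x1 f (N + 1)) = uk d x1 f N := by
  induction N with
  | zero =>
    rw [psiS]
    simp only [zero_add, Finset.range_one, Finset.sum_singleton]
    rw [termk, uk]
    simp
  | succ N ih =>
    have : psiS d x1 f (N + 1 + 1) = psiS d x1 f (N + 1) + termk d x1 f (N + 1) := by
      rw [psiS, psiS, Finset.sum_range_succ]
    rw [this, map_add, ih, d_termk d x1 hdx1 f N]
    abel

include hM hx1 hdx1 in
lemma d_psi_zero (hcont : ∀ r : ℕ, ∀ x ∈ M ^ r, d x ∈ M ^ (r - 1))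
    (f : MvPowerSeries (Fin n) L) : d (psi d x1 f) = 0 := by
  apply MvPowerSeries.ext
  intro m
  set N := m.degree + 2 with hN
  have hsplit : psi d x1 f = psiS d x1 f N + (psi d x1 f - psiS d x1 f N) := by ring
  rw [map_zero, hsplit, map_add, map_add]
  have e1 : MvPowerSeries.coeff m (d (psiS d x1 f N)) = 0 := by
    have : psiS d x1 f N = psiS d x1 f ((m.degree + 1) + 1) := by rw [hN]
    rw [this, d_psiS d x1 hdx1 f (m.degree + 1)]
    exact mem_pow_ordGe hM (uk_mem d x1 hx1 f (m.degree + 1)) m (by omega)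
  have e2 : MvPowerSeries.coeff m (d (psi d x1 f - psiS d x1 f N)) = 0 := by
    have h1 : psi d x1 f - psiS d x1 f N ∈ M ^ N :=
      ordGe_mem_pow hM (ordGe_psi_sub d x1 hM hx1 f N)
    have h2 := hcont N _ h1
    exact mem_pow_ordGe hM h2 m (by omega)
  rw [e1, e2, add_zero]

lemma coeff_single_mul (t : Fin n) (f g : MvPowerSeries (Fin n) L)
    (hf : MvPowerSeries.coeff 0 f = 0) :
    MvPowerSeries.coeff (Finsupp.single t 1) (f * g)
      = MvPowerSeries.coeff (Finsupp.single t 1) f * MvPowerSeries.coeff 0 g := by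
  classical
  rw [MvPowerSeries.coeff_mul]
  rw [Finset.sum_eq_single (Finsupp.single t 1, 0)]
  · rintro ⟨p, q⟩ hpq hne
    rw [Finset.HasAntidiagonal.mem_antidiagonal] at hpq
    have hdeg : p.degree + q.degree = 1 := by
      rw [← deg_add, hpq, deg_single]
    rcases Nat.eq_zero_or_pos p.degree with hp | hp
    · have : p = 0 := Finsupp.degree_eq_zero_iff p |>.1 hp
      subst this
      simp [hf]
    · have hq : q.degree = 0 := by omega
      have : q = 0 := Finsupp.degree_eq_zero_iff q |>.1 hq
      subst this
      rw [add_zero] at hpq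
      subst hpq
      exact absurd rfl hne
  · intro h
    exact absurd (Finset.HasAntidiagonal.mem_antidiagonal.2 (add_zero _)) h

include hM hx1 in
lemma coeff_zero_psi (f : MvPowerSeries (Fin n) L) :
    MvPowerSeries.coeff 0 (psi d x1 f) = MvPowerSeries.coeff 0 f := by
  rw [coeff_psi_eq d x1 hM hx1 f 0 (N := 1) (by simp)]
  rw [psiS]
  simp only [Finset.range_one, Finset.sum_singleton]
  rw [termk]
  simp

include hM hx1 in
lemma coeff_single_psi (f : MvPowerSeries (Fin n) L) (t : Fin n) :
    MvPowerSeries.coeff (Finsupp.single t 1) (psi d x1 f)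
      = MvPowerSeries.coeff (Finsupp.single t 1) f
        - MvPowerSeries.coeff (Finsupp.single t 1) x1 * MvPowerSeries.coeff 0 (d f) := by
  have hx0 : MvPowerSeries.coeff 0 x1 = 0 := by
    rw [hM, RingHom.mem_ker] at hx1
    simpa using hx1
  rw [coeff_psi_eq d x1 hM hx1 f _ (N := 2) (by rw [deg_single]; omega)]
  rw [psiS, Finset.sum_range_succ, Finset.range_one, Finset.sum_singleton]
  have ht0 : termk d x1 f 0 = f := by rw [termk]; simp
  have ht1 : termk d x1 f 1 = (-x1) * d f := by rw [termk]; simp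
  rw [ht0, ht1, map_add]
  rw [coeff_single_mul t (-x1) (d f) (by simpa using hx0)]
  simp only [map_neg]
  ring

end Psi

variable {L : Type*} [Field L] {n : ℕ}

lemma ordGe_neg {r : ℕ} {f : MvPowerSeries (Fin n) L} (hf : ordGe r f) : ordGe r (-f) := by
  intro m hm; rw [map_neg, hf m hm, neg_zero]

lemma ordGe_sum {r : ℕ} {ι : Type*} {s : Finset ι} {f : ι → MvPowerSeries (Fin n) L}
    (hf : ∀ i ∈ s, ordGe r (f i)) : ordGe r (∑ i ∈ s, f i) := by
  intro m hm
  rw [map_sum]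
  exact Finset.sum_eq_zero fun i hi => hf i hi m hm

lemma ordGe_one_of_constantCoeff {f : MvPowerSeries (Fin n) L}
    (hf : MvPowerSeries.constantCoeff f = 0) : ordGe 1 f := by
  intro m hm
  rw [Nat.lt_one_iff, Finsupp.degree_eq_zero_iff] at hm
  subst hm
  simpa using hf

lemma constantCoeff_of_ordGe_one {f : MvPowerSeries (Fin n) L} {r : ℕ} (hr : 0 < r)
    (hf : ordGe r f) : MvPowerSeries.constantCoeff f = 0 := by
  have := hf 0 (by simpa using hr)
  simpa using this

section Span

variable (z : Fin n → MvPowerSeries (Fin n) L)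

noncomputable def Fseq (f : MvPowerSeries (Fin n) L) : ℕ → MvPowerSeries (Fin n) L
  | 0 => f
  | s + 1 => ∑ k, Dg (Fseq f s) k * (X k - z k)

variable {z} {f : MvPowerSeries (Fin n) L}
  (hz : ∀ k, ordGe 2 (z k - X k)) (hf : ordGe 1 f)

include hz hf in
lemma ordGe_Fseq (s : ℕ) : ordGe (s + 1) (Fseq z f s) := by
  induction s with
  | zero => exact hf
  | succ s ih =>
    rw [Fseq]
    apply ordGe_sum
    intro k _
    have h1 : ordGe s (Dg (Fseq z f s) k) := ordGe_Dg ih k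
    have h2 : ordGe 2 (X k - z k) := by
      have := ordGe_neg (hz k)
      rwa [neg_sub] at this
    exact (ordGe_mul h1 h2 : ordGe (s + 2) _)

include hz hf in
lemma Fseq_step (s : ℕ) :
    Fseq z f s - Fseq z f (s + 1) = ∑ k, Dg (Fseq z f s) k * z k := by
  have h0 : MvPowerSeries.constantCoeff (Fseq z f s) = 0 :=
    constantCoeff_of_ordGe_one (by omega) (ordGe_Fseq hz hf s)
  conv_lhs => rw [← sum_X_Dg (Fseq z f s) h0]
  rw [show Fseq z f (s + 1) = ∑ k, Dg (Fseq z f s) k * (X k - z k) from rfl]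
  rw [← Finset.sum_sub_distrib, ← Finset.sum_congr rfl]
  intro k _
  ring

lemma span_z {M : Ideal (MvPowerSeries (Fin n) L)}
    (hM : M = RingHom.ker (MvPowerSeries.constantCoeff))
    (hz : ∀ k, ordGe 2 (z k - X k)) :
    Ideal.span (Set.range z) = M := by
  apply le_antisymm
  · rw [Ideal.span_le]
    rintro _ ⟨k, rfl⟩
    rw [SetLike.mem_coe, hM, RingHom.mem_ker]
    have h0 := hz k 0 (by simp)
    rw [map_sub] at h0
    have : MvPowerSeries.coeff 0 (X k : MvPowerSeries (Fin n) L) = 0 := by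
      simpa using MvPowerSeries.constantCoeff_X (R := L) k
    rw [this, sub_zero] at h0
    simpa using h0
  · intro f hf
    have hf1 : ordGe 1 f := by
      apply ordGe_one_of_constantCoeff
      rw [hM, RingHom.mem_ker] at hf
      exact hf
    set G : Fin n → MvPowerSeries (Fin n) L := fun k =>
      (fun m => ∑ s ∈ Finset.range (m.degree + 1),
        MvPowerSeries.coeff m (Dg (Fseq z f s) k)) with hGdef
    have hG : ∀ (k : Fin n) (p : Fin n →₀ ℕ) (B : ℕ), p.degree ≤ B →
        MvPowerSeries.coeff p (G k) =
          MvPowerSeries.coeff p (∑ s ∈ Finset.range (B + 1), Dg (Fseq z f s) k) := by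
      intro k p B hB
      have h1 : MvPowerSeries.coeff p (G k) =
          ∑ s ∈ Finset.range (p.degree + 1), MvPowerSeries.coeff p (Dg (Fseq z f s) k) := rfl
      rw [h1, map_sum]
      apply Finset.sum_subset (Finset.range_subset_range.2 (by omega))
      intro s hs hs'
      simp only [Finset.mem_range] at hs hs'
      exact ordGe_Dg (ordGe_Fseq hz hf1 s) k p (by omega)
    have key : f = ∑ k, G k * z k := by
      apply MvPowerSeries.ext
      intro m
      classical
      set B := m.degree with hB
      have e1 : MvPowerSeries.coeff m (∑ k, G k * z k) =
          MvPowerSeries.coeff m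
            (∑ k, (∑ s ∈ Finset.range (B + 1), Dg (Fseq z f s) k) * z k) := by
        rw [map_sum, map_sum]
        apply Finset.sum_congr rfl
        intro k _
        rw [MvPowerSeries.coeff_mul, MvPowerSeries.coeff_mul]
        apply Finset.sum_congr rfl
        rintro ⟨p, q⟩ hpq
        rw [Finset.HasAntidiagonal.mem_antidiagonal] at hpq
        have hp : p.degree ≤ B := by
          have : p.degree + q.degree = m.degree := by rw [← deg_add, hpq]
          omega
        rw [hG k p B hp]
      have e2 : (∑ k, (∑ s ∈ Finset.range (B + 1), Dg (Fseq z f s) k) * z k) =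
          ∑ s ∈ Finset.range (B + 1), (Fseq z f s - Fseq z f (s + 1)) := by
        have : ∀ k, (∑ s ∈ Finset.range (B + 1), Dg (Fseq z f s) k) * z k
            = ∑ s ∈ Finset.range (B + 1), Dg (Fseq z f s) k * z k := by
          intro k; rw [Finset.sum_mul]
        rw [Finset.sum_congr rfl (fun k _ => this k), Finset.sum_comm]
        apply Finset.sum_congr rfl
        intro s _
        rw [Fseq_step hz hf1 s]
      have e3 : ∑ s ∈ Finset.range (B + 1), (Fseq z f s - Fseq z f (s + 1))
          = f - Fseq z f (B + 1) := by
        rw [Finset.sum_range_sub' (fun s => Fseq z f s) (B + 1)]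
        rfl
      rw [e1, e2, e3, map_sub]
      have : MvPowerSeries.coeff m (Fseq z f (B + 1)) = 0 :=
        ordGe_Fseq hz hf1 (B + 1) m (by omega)
      rw [this, sub_zero]
    rw [key]
    exact Submodule.sum_mem _ fun k _ =>
      Ideal.mul_mem_left _ _ (Ideal.subset_span ⟨k, rfl⟩)

end Span

end Aux

open MvPowerSeries

/-- If d is a continuous L-derivation on L[[t₁,...,tₙ]] (n > 1, char L = 0) and
x₁ lies in the maximal ideal M with d(x₁) = 1, then there is a system of
parameters x₁, y₂, ..., yₙ (generating M) with d(yᵢ) = 0 for all i ≥ 2. -/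
theorem derivation_straightening
    (L : Type*) [Field L] [CharZero L] (n : ℕ) (hn : 1 < n)
    (d : Derivation L (MvPowerSeries (Fin n) L) (MvPowerSeries (Fin n) L))
    (M : Ideal (MvPowerSeries (Fin n) L))
    (hM : M = RingHom.ker (constantCoeff : MvPowerSeries (Fin n) L →+* L))
    (hcont : ∀ r : ℕ, ∀ x ∈ M ^ r, d x ∈ M ^ (r - 1))
    (x1 : MvPowerSeries (Fin n) L) (hx1 : x1 ∈ M) (hdx1 : d x1 = 1) :
    ∃ y : Fin n → MvPowerSeries (Fin n) L,
      y ⟨0, by omega⟩ = x1 ∧ Ideal.span (Set.range y) = M ∧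
      ∀ i : Fin n, i ≠ ⟨0, by omega⟩ → d (y i) = 0 := by
  classical
  haveI : NeZero n := ⟨by omega⟩
  have h00 : (⟨0, by omega⟩ : Fin n) = 0 := by
    ext; simp
  have hx0 : MvPowerSeries.coeff 0 x1 = 0 := by
    have := hx1
    rw [hM, RingHom.mem_ker] at this
    simpa using this
  set v : Fin n → L := fun t => MvPowerSeries.coeff (Finsupp.single t 1) x1 with hv
  obtain ⟨j, hj⟩ : ∃ j, v j ≠ 0 := by
    by_contra hcon
    push_neg at hcon
    have hord : ordGe 2 x1 := by
      intro m hm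
      have : m.degree = 0 ∨ m.degree = 1 := by omega
      rcases this with h0 | h1
      · rw [Finsupp.degree_eq_zero_iff] at h0
        subst h0
        exact hx0
      · obtain ⟨t, rfl⟩ := deg_one_eq m h1
        exact hcon t
    have hmem := hcont 2 x1 (ordGe_mem_pow hM hord)
    rw [hdx1] at hmem
    norm_num [pow_one] at hmem
    rw [hM, RingHom.mem_ker] at hmem
    simp at hmem
  set c : Fin n → L := fun t => MvPowerSeries.coeff 0 (d (X t)) with hc
  set τ : Equiv.Perm (Fin n) := Equiv.swap (0 : Fin n) j with hτ
  have hτj : τ 0 = j := Equiv.swap_apply_left 0 j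
  have hττ : ∀ k, τ (τ k) = k := fun k => Equiv.swap_apply_self 0 j k
  have hτ0 : ∀ i, τ i = j ↔ i = 0 := by
    intro i
    constructor
    · intro h; rw [← hττ i, h, ← hτj, hττ]
    · rintro rfl; exact hτj
  have hsingle : ∀ s t : Fin n,
      MvPowerSeries.coeff (Finsupp.single t 1) (X s : MvPowerSeries (Fin n) L)
        = if s = t then 1 else 0 := by
    intro s t
    rw [MvPowerSeries.coeff_X]
    by_cases h : s = t
    · rw [if_pos (by rw [h]), if_pos h]
    · rw [if_neg (fun hh => h (((Finsupp.single_left_inj one_ne_zero).1 hh).symm)), if_neg h]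
  set Y : Fin n → MvPowerSeries (Fin n) L :=
    fun i => if i = 0 then x1 else psi d x1 (X (τ i)) with hY
  have hY0eq : Y 0 = x1 := by simp only [hY, if_pos rfl]
  have hYne : ∀ i, i ≠ 0 → Y i = psi d x1 (X (τ i)) := fun i hi => by
    simp only [hY, if_neg hi]
  refine ⟨Y, ?_, ?_, ?_⟩
  · rw [h00, hY0eq]
  · -- the span condition
    set Y1 : Fin n → MvPowerSeries (Fin n) L :=
      fun i => psi d x1 (X (τ i)) + c (τ i) • x1 with hY1
    have hY1eq : ∀ i, Y1 i = psi d x1 (X (τ i)) + c (τ i) • x1 := fun i => rfl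
    set Y0 : MvPowerSeries (Fin n) L :=
      (v j)⁻¹ • (x1 - ∑ i ∈ Finset.univ.erase 0, v (τ i) • Y1 i) with hY0d
    set z : Fin n → MvPowerSeries (Fin n) L := fun k => if k = 0 then Y0 else Y1 k with hzdef
    have hz0 : z 0 = Y0 := by simp only [hzdef, if_pos rfl]
    have hzY1 : ∀ i, i ≠ 0 → z i = Y1 i := fun i hi => by simp only [hzdef, if_neg hi]
    have hvt : ∀ t, MvPowerSeries.coeff (Finsupp.single t 1) x1 = v t := fun t => rfl
    have hY1c0 : ∀ i, MvPowerSeries.coeff 0 (Y1 i) = 0 := by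
      intro i
      rw [hY1eq i, map_add, coeff_lsmul]
      rw [coeff_zero_psi d x1 hM hx1, hx0, mul_zero, add_zero]
      simpa using MvPowerSeries.constantCoeff_X (R := L) (τ i)
    have hY1lin : ∀ i t, MvPowerSeries.coeff (Finsupp.single t 1) (Y1 i)
        = if τ i = t then 1 else 0 := by
      intro i t
      rw [hY1eq i, map_add, coeff_lsmul]
      rw [coeff_single_psi d x1 hM hx1 (X (τ i)) t, hsingle (τ i) t, hvt t]
      have h1 : MvPowerSeries.coeff 0 (d (X (τ i))) = c (τ i) := rfl
      rw [h1]
      ring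
    have hzc0 : ∀ k, MvPowerSeries.coeff 0 (z k) = 0 := by
      intro k
      by_cases hk : k = 0
      · subst hk
        rw [hz0, hY0d, coeff_lsmul, map_sub, hx0, map_sum]
        rw [Finset.sum_eq_zero (fun i _ => by rw [coeff_lsmul, hY1c0, mul_zero])]
        simp
      · rw [hzY1 k hk]; exact hY1c0 k
    have hzlin : ∀ k t, MvPowerSeries.coeff (Finsupp.single t 1) (z k)
        = if τ k = t then 1 else 0 := by
      intro k t
      by_cases hk : k = 0
      · subst hk
        rw [hz0, hY0d, coeff_lsmul, map_sub, map_sum]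
        have hcongr : ∀ i ∈ Finset.univ.erase (0 : Fin n),
            MvPowerSeries.coeff (Finsupp.single t 1) (v (τ i) • Y1 i)
              = if τ i = t then v (τ i) else 0 := by
          intro i _
          rw [coeff_lsmul, hY1lin i t, mul_ite, mul_one, mul_zero]
        rw [Finset.sum_congr rfl hcongr]
        have hsum : ∑ i ∈ Finset.univ.erase (0 : Fin n), (if τ i = t then v (τ i) else 0)
            = if t ∈ Finset.univ.erase j then v t else 0 := by
          rw [Finset.sum_equiv τ (t := Finset.univ.erase j)
            (g := fun i' => if i' = t then v i' else 0)]
          · rw [Finset.sum_ite_eq' (Finset.univ.erase j) t v]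
          · intro i
            simp only [Finset.mem_erase, Finset.mem_univ, and_true, ne_eq]
            exact (not_congr (hτ0 i)).symm
          · intro i _
            rfl
        rw [hsum, hvt t, hτj]
        rcases eq_or_ne t j with rfl | htj
        · rw [if_neg (by simp), sub_zero, if_pos rfl]
          exact inv_mul_cancel₀ hj
        · rw [if_pos (by simp [htj]), sub_self, mul_zero, if_neg (Ne.symm htj)]
      · rw [hzY1 k hk]; exact hY1lin k t
    have hz2 : ∀ k, ordGe 2 (z k - X (τ k)) := by
      intro k m hm
      rw [map_sub]
      have : m.degree = 0 ∨ m.degree = 1 := by omega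
      rcases this with h0 | h1
      · rw [Finsupp.degree_eq_zero_iff] at h0
        subst h0
        rw [hzc0 k]
        simpa using (MvPowerSeries.constantCoeff_X (R := L) (τ k)).symm
      · obtain ⟨t, rfl⟩ := deg_one_eq m h1
        rw [hzlin k t, hsingle (τ k) t, sub_self]
    have hZ : ∀ k, ordGe 2 ((fun k => z (τ k)) k - X k) := by
      intro k
      have := hz2 (τ k)
      rwa [hττ k] at this
    have hspanZ : Ideal.span (Set.range (fun k => z (τ k))) = M := span_z hM hZ
    have hrange : Set.range (fun k => z (τ k)) = Set.range z :=
      (Equiv.surjective τ).range_comp z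
    rw [← hspanZ, hrange]
    have hx1span : x1 ∈ Ideal.span (Set.range z) := by
      have h1 : ∀ i ∈ Finset.univ.erase (0 : Fin n), v (τ i) • z i = v (τ i) • Y1 i :=
        fun i hi => by rw [hzY1 i (Finset.mem_erase.1 hi).1]
      have hexp : x1 = v j • z 0 + ∑ i ∈ Finset.univ.erase 0, v (τ i) • z i := by
        rw [Finset.sum_congr rfl h1, hz0, hY0d, smul_smul, mul_inv_cancel₀ hj, one_smul]
        ring
      rw [hexp]
      exact add_mem (lsmul_mem _ (Ideal.subset_span ⟨0, rfl⟩))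
        (sum_mem fun i _ => lsmul_mem _ (Ideal.subset_span ⟨i, rfl⟩))
    apply le_antisymm
    · rw [Ideal.span_le]
      rintro - ⟨i, rfl⟩
      rw [SetLike.mem_coe]
      by_cases hi : i = 0
      · subst hi
        rw [hY0eq]
        exact hx1span
      · have hYi : Y i = z i - c (τ i) • x1 := by
          rw [hYne i hi, hzY1 i hi, hY1eq i]
          ring
        rw [hYi]
        exact sub_mem (Ideal.subset_span ⟨i, rfl⟩) (lsmul_mem _ hx1span)
    · rw [Ideal.span_le]
      rintro - ⟨k, rfl⟩
      rw [SetLike.mem_coe]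
      have hx1Y : x1 ∈ Ideal.span (Set.range Y) := by
        rw [← hY0eq]
        exact Ideal.subset_span ⟨0, rfl⟩
      have hY1mem : ∀ i, i ≠ 0 → Y1 i ∈ Ideal.span (Set.range Y) := by
        intro i hi
        have heq : Y1 i = Y i + c (τ i) • x1 := by
          rw [hYne i hi, hY1eq i]
        rw [heq]
        exact add_mem (Ideal.subset_span ⟨i, rfl⟩) (lsmul_mem _ hx1Y)
      by_cases hk : k = 0
      · subst hk
        rw [hz0, hY0d]
        refine lsmul_mem _ (sub_mem hx1Y (sum_mem fun i hi => lsmul_mem _ ?_))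
        exact hY1mem i (Finset.mem_erase.1 hi).1
      · rw [hzY1 k hk]
        exact hY1mem k hk
  · -- d (Y i) = 0 for i ≠ 0
    intro i hi
    rw [h00] at hi
    rw [hYne i hi]
    exact d_psi_zero d x1 hM hx1 hdx1 hcont (X (τ i))
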